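/- Suppose a(0) > 0, f(0) > 0, the throat boundary conditions χ'(0) = a'(0) = f'(0) = 0 hold, χ(0) ≠ 0, ω ≠ 0, and both the field equation (E3) and the constraint (C) hold at r = 0. Then f''(0) > 0; in other words, the squared areal radius f has a strict local minimum at the throat r = 0. -/

import Mathlib

open Real Filter

noncomputable section

/-- `Λ̃ = (2ℓ+1)Λ/(4π)`. -/
def lamT (Λ : ℝ) (ℓ : ℕ) : ℝ := (2 * (ℓ : ℝ) + 1) * Λ / (4 * Real.pi)

/-- Field equation (E1):
`χ'' = -(f'/f + a'/a)·χ' + (1/a)·[μ² - ω²/a + ℓ(ℓ+1)/f - 2Λ̃χ²]·χ`. -/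
def EqE1 (μ ω Λ : ℝ) (ℓ : ℕ) (χ a f : ℝ → ℝ) (r : ℝ) : Prop :=
  deriv (deriv χ) r =
    -(deriv f r / f r + deriv a r / a r) * deriv χ r +
      (1 / a r) *
        (μ ^ 2 - ω ^ 2 / a r + (ℓ : ℝ) * ((ℓ : ℝ) + 1) / f r
          - 2 * lamT Λ ℓ * χ r ^ 2) * χ r

/-- Field equation (E2):
`a'' = -(f'/f)·a' + ((2ℓ+1)/(4π))·[μ² - 2ω²/a - Λ̃χ²]·χ²`. -/
def EqE2 (μ ω Λ : ℝ) (ℓ : ℕ) (χ a f : ℝ → ℝ) (r : ℝ) : Prop :=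
  deriv (deriv a) r =
    -(deriv f r / f r) * deriv a r +
      ((2 * (ℓ : ℝ) + 1) / (4 * Real.pi)) *
        (μ ^ 2 - 2 * ω ^ 2 / a r - lamT Λ ℓ * χ r ^ 2) * χ r ^ 2

/-- Field equation (E3):
`f'' = (1/a)·(-a'·f' + 2 + ((2ℓ+1)/(4π))·[(μ² - Λ̃χ²)·f + ℓ(ℓ+1)]·χ²)`. -/
def EqE3 (μ ω Λ : ℝ) (ℓ : ℕ) (χ a f : ℝ → ℝ) (r : ℝ) : Prop :=
  deriv (deriv f) r =
    (1 / a r) *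
      (-(deriv a r) * deriv f r + 2 +
        ((2 * (ℓ : ℝ) + 1) / (4 * Real.pi)) *
          ((μ ^ 2 - lamT Λ ℓ * χ r ^ 2) * f r + (ℓ : ℝ) * ((ℓ : ℝ) + 1)) * χ r ^ 2)

/-- Constraint (C):
`(f'/(2f))·(a' + a·f'/(2f)) - 1/f
  = ((2ℓ+1)/(8π))·[-a·χ'² + (μ² - Λ̃χ² - ω²/a + ℓ(ℓ+1)/f)·χ²]`. -/
def EqC (μ ω Λ : ℝ) (ℓ : ℕ) (χ a f : ℝ → ℝ) (r : ℝ) : Prop :=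
  (deriv f r / (2 * f r)) * (deriv a r + a r * deriv f r / (2 * f r)) - 1 / f r =
    ((2 * (ℓ : ℝ) + 1) / (8 * Real.pi)) *
      (-(a r) * deriv χ r ^ 2 +
        (μ ^ 2 - lamT Λ ℓ * χ r ^ 2 - ω ^ 2 / a r
          + (ℓ : ℝ) * ((ℓ : ℝ) + 1) / f r) * χ r ^ 2)

/-- for `ω ≠ 0` and `χ(0) ≠ 0`, (E3) and (C) at the throat give
`f''(0) > 0`: the squared areal radius has a strict local minimum at the throat. -/
theorem throat_strict_minimum
    (μ ω Λ : ℝ) (ℓ : ℕ) (χ a f : ℝ → ℝ)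
    (ha0 : 0 < a 0) (hf0 : 0 < f 0)
    (hχ'0 : deriv χ 0 = 0) (ha'0 : deriv a 0 = 0) (hf'0 : deriv f 0 = 0)
    (hχ0 : χ 0 ≠ 0) (hω : ω ≠ 0)
    (hE3 : EqE3 μ ω Λ ℓ χ a f 0) (hC : EqC μ ω Λ ℓ χ a f 0) :
    0 < deriv (deriv f) 0 := by
  have hπ : (0:ℝ) < Real.pi := Real.pi_pos
  unfold EqE3 at hE3
  unfold EqC at hC
  simp only [hχ'0, ha'0, hf'0] at hE3 hC
  have hkey : deriv (deriv f) 0 =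
      f 0 * ((2 * (ℓ : ℝ) + 1) / (4 * Real.pi)) * ω ^ 2 * χ 0 ^ 2 / a 0 ^ 2 := by
    rw [hE3]
    field_simp at hC ⊢
    have hC2 : -(8 * Real.pi * a 0) =
        (2 * (ℓ : ℝ) + 1) * ((((μ ^ 2 - lamT Λ ℓ * χ 0 ^ 2) * a 0 - ω ^ 2) * f 0
          + (ℓ : ℝ) * ((ℓ : ℝ) + 1) * a 0) * χ 0 ^ 2) :=
      mul_right_cancel₀ hf0.ne' (by linear_combination (1/4 : ℝ) * hC)
    linear_combination (-1 : ℝ) * hC2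
  rw [hkey]
  positivity
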